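/- Let θ ∈ (0,1) and α₀, C > 0, and set β := (1/θ − 1)⁻¹ and C̃ := C·(1/θ − 1). Suppose y : [0, ∞) → [0, ∞) is continuously differentiable, y(0) > 0, and y′(t) + C·y(t)^{1/θ}·α₀^{1 − 1/θ} ≤ 0 for all t ≥ 0. Then for all t ≥ 0, y(t) ≤ α₀·((α₀/y(0))^{1/β} + C̃·t)^{−β}. -/
import Mathlib


/-- Nonlinear Gronwall estimate for a `θ`-coercive energy: if `y : [0,∞) → [0,∞)` is
continuously differentiable with `y(0) > 0` and
`y′(t) + C·y(t)^{1/θ}·α₀^{1−1/θ} ≤ 0` for all `t ≥ 0`, then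
`y(t) ≤ α₀·((α₀/y(0))^{1/β} + C̃·t)^{−β}` where `β = (1/θ − 1)⁻¹` and
`C̃ = C·(1/θ − 1)`. -/
theorem bihari_hypocoercive_energy (θ : ℝ) (hθ : θ ∈ Set.Ioo (0 : ℝ) 1)
    (α₀ C : ℝ) (hα₀ : 0 < α₀) (hC : 0 < C)
    (β Ctil : ℝ) (hβ : β = (1 / θ - 1)⁻¹) (hCtil : Ctil = C * (1 / θ - 1))
    (y y' : ℝ → ℝ)
    (hy_deriv : ∀ t ∈ Set.Ici (0 : ℝ), HasDerivWithinAt y (y' t) (Set.Ici 0) t)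
    (hy'_cont : ContinuousOn y' (Set.Ici 0))
    (hy_nonneg : ∀ t ∈ Set.Ici (0 : ℝ), 0 ≤ y t)
    (hy0 : 0 < y 0)
    (hode : ∀ t ∈ Set.Ici (0 : ℝ),
      y' t + C * y t ^ (1 / θ) * α₀ ^ (1 - 1 / θ) ≤ 0) :
    ∀ t ∈ Set.Ici (0 : ℝ),
      y t ≤ α₀ * ((α₀ / y 0) ^ (1 / β) + Ctil * t) ^ (-β) := by
  obtain ⟨hθ0, hθ1⟩ := hθ
  have hs : (0:ℝ) < 1 / θ - 1 := by
    have : 1 < 1 / θ := by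
      rw [lt_div_iff₀ hθ0]; linarith
    linarith
  have hβpos : 0 < β := by rw [hβ]; positivity
  have hCtilpos : 0 < Ctil := by rw [hCtil]; positivity
  have hβinv : 1 / β = 1 / θ - 1 := by
    rw [hβ, one_div, inv_inv]
  set e : ℝ := 1 - 1 / θ with he
  have he_neg : e < 0 := by simp only [he]; linarith
  have heβ : e = -(1 / β) := by rw [hβinv]; ring
  intro t ht
  have ht0 : (0:ℝ) ≤ t := ht
  -- RHS base is positive
  have hB : 0 < (α₀ / y 0) ^ (1 / β) + Ctil * t := by
    have := Real.rpow_pos_of_pos (div_pos hα₀ hy0) (1 / β)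
    nlinarith
  by_cases hyt : y t ≤ 0
  · calc y t ≤ 0 := hyt
      _ ≤ _ := by positivity
  push_neg at hyt
  -- y' is nonpositive on Ici 0
  have hy'np : ∀ s ∈ Set.Ici (0:ℝ), y' s ≤ 0 := by
    intro s hs'
    have h := hode s hs'
    have : 0 ≤ C * y s ^ (1 / θ) * α₀ ^ (1 - 1 / θ) := by
      have := hy_nonneg s hs'
      positivity
    linarith
  have hIcc : Set.Icc (0:ℝ) t ⊆ Set.Ici 0 := Set.Icc_subset_Ici_self
  have hycont : ContinuousOn y (Set.Icc 0 t) :=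
    fun s hs' => ((hy_deriv s (hIcc hs')).continuousWithinAt).mono hIcc
  have hderivAt : ∀ s ∈ Set.Ioo (0:ℝ) t, HasDerivAt y (y' s) s := by
    intro s hs'
    exact (hy_deriv s (le_of_lt hs'.1)).hasDerivAt (Ici_mem_nhds hs'.1)
  have hint : interior (Set.Icc (0:ℝ) t) = Set.Ioo 0 t := interior_Icc
  -- y is antitone on Icc 0 t, hence positive there
  have hanti : AntitoneOn y (Set.Icc 0 t) := by
    apply antitoneOn_of_deriv_nonpos (convex_Icc 0 t) hycont
    · intro s hs'
      rw [hint] at hs'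
      exact (hderivAt s hs').differentiableAt.differentiableWithinAt
    · intro s hs'
      rw [hint] at hs'
      rw [(hderivAt s hs').deriv]
      exact hy'np s (le_of_lt hs'.1)
  have hypos : ∀ s ∈ Set.Icc (0:ℝ) t, 0 < y s := by
    intro s hs'
    exact lt_of_lt_of_le hyt (hanti hs' (Set.right_mem_Icc.mpr ht0) hs'.2)
  -- define g s = (y s / α₀) ^ e - Ctil * s, monotone on Icc 0 t
  set g : ℝ → ℝ := fun s => (y s / α₀) ^ e - Ctil * s with hg
  have hgmono : MonotoneOn g (Set.Icc 0 t) := by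
    apply monotoneOn_of_deriv_nonneg (convex_Icc 0 t)
    · apply ContinuousOn.sub
      · apply ContinuousOn.rpow_const (hycont.div_const α₀)
        intro s hs'
        exact Or.inl (div_pos (hypos s hs') hα₀).ne'
      · exact (continuousOn_const.mul continuousOn_id)
    · intro s hs'
      rw [hint] at hs'
      have hu : 0 < y s / α₀ := div_pos (hypos s ⟨hs'.1.le, hs'.2.le⟩) hα₀
      have h1 := ((hderivAt s hs').div_const α₀).rpow_const (p := e) (Or.inl hu.ne')
      have h2 : HasDerivAt (fun s => Ctil * s) Ctil s := by
        simpa using (hasDerivAt_id s).const_mul Ctil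
      exact (h1.sub h2).differentiableAt.differentiableWithinAt
    · intro s hs'
      rw [hint] at hs'
      have hsmem : s ∈ Set.Icc (0:ℝ) t := ⟨hs'.1.le, hs'.2.le⟩
      have hys := hypos s hsmem
      have hu : 0 < y s / α₀ := div_pos hys hα₀
      have hgd : HasDerivAt g (y' s / α₀ * e * (y s / α₀) ^ (e - 1) - Ctil) s := by
        have h1 := ((hderivAt s hs').div_const α₀).rpow_const (p := e) (Or.inl hu.ne')
        have h2 : HasDerivAt (fun s => Ctil * s) Ctil s := by
          simpa using (hasDerivAt_id s).const_mul Ctil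
        exact h1.sub h2
      rw [hgd.deriv]
      -- show Ctil ≤ y' s / α₀ * e * (y s/α₀)^(e-1)
      have hode' : y' s ≤ -(C * y s ^ (1 / θ) * α₀ ^ (1 - 1 / θ)) := by
        have := hode s (le_of_lt hs'.1); linarith
      have hkey : -(C * y s ^ (1 / θ) * α₀ ^ (1 - 1 / θ)) / α₀ * e * (y s / α₀) ^ (e - 1)
          = Ctil := by
        rw [Real.div_rpow hys.le hα₀.le]
        have h3 : y s ^ (1 / θ) * y s ^ (e - 1) = 1 := by
          rw [← Real.rpow_add hys]
          norm_num [he]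
        have h4 : α₀ ^ (1 - 1 / θ) = α₀ ^ e := by rw [he]
        have h5 : α₀ ^ e ≠ 0 := (Real.rpow_pos_of_pos hα₀ e).ne'
        have h6 : (α₀:ℝ) ^ (e - 1) = α₀ ^ e / α₀ := by
          rw [Real.rpow_sub hα₀, Real.rpow_one]
        have h7 : α₀ * α₀ ^ (e - 1) = α₀ ^ e := by
          rw [h6]; field_simp
        rw [h4]
        have h8 : -(C * y s ^ (1 / θ) * α₀ ^ e) / α₀ * e * (y s ^ (e - 1) / α₀ ^ (e - 1))
            = (-e * C) * (y s ^ (1 / θ) * y s ^ (e - 1)) * (α₀ ^ e / (α₀ * α₀ ^ (e - 1))) := by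
          ring
        rw [h8, h3, h7, div_self h5, hCtil]
        simp only [he]; ring
      have hmul : -(C * y s ^ (1 / θ) * α₀ ^ (1 - 1 / θ)) / α₀ * e * (y s / α₀) ^ (e - 1)
          ≤ y' s / α₀ * e * (y s / α₀) ^ (e - 1) := by
        have hfac : (0:ℝ) ≤ (y s / α₀) ^ (e - 1) := (Real.rpow_pos_of_pos hu _).le
        have hle : -(C * y s ^ (1 / θ) * α₀ ^ (1 - 1 / θ)) * e ≤ y' s * e :=
          mul_le_mul_of_nonpos_right hode' he_neg.le
        have h9 := mul_le_mul_of_nonneg_right ((div_le_div_iff_of_pos_right hα₀).mpr hle) hfac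
        calc -(C * y s ^ (1 / θ) * α₀ ^ (1 - 1 / θ)) / α₀ * e * (y s / α₀) ^ (e - 1)
            = -(C * y s ^ (1 / θ) * α₀ ^ (1 - 1 / θ)) * e / α₀ * (y s / α₀) ^ (e - 1) := by ring
          _ ≤ y' s * e / α₀ * (y s / α₀) ^ (e - 1) := h9
          _ = y' s / α₀ * e * (y s / α₀) ^ (e - 1) := by ring
      linarith [hkey ▸ hmul]
  -- conclude
  have hmem0 : (0:ℝ) ∈ Set.Icc (0:ℝ) t := Set.left_mem_Icc.mpr ht0
  have hmemt : t ∈ Set.Icc (0:ℝ) t := Set.right_mem_Icc.mpr ht0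
  have hg0t : g 0 ≤ g t := hgmono hmem0 hmemt ht0
  have hw0 : (y 0 / α₀) ^ e = (α₀ / y 0) ^ (1 / β) := by
    rw [heβ, Real.rpow_neg (by positivity), ← Real.inv_rpow (by positivity), inv_div]
  have hwt : (α₀ / y 0) ^ (1 / β) + Ctil * t ≤ (y t / α₀) ^ e := by
    simp only [hg, hw0] at hg0t
    linarith
  have hut : 0 < y t / α₀ := div_pos hyt hα₀
  have hfin : ((y t / α₀) ^ e) ^ (-β) = y t / α₀ := by
    rw [← Real.rpow_mul hut.le]
    have : e * -β = 1 := by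
      rw [heβ]; field_simp
    rw [this, Real.rpow_one]
  have hstep : ((α₀ / y 0) ^ (1 / β) + Ctil * t) ^ (-β) ≥ ((y t / α₀) ^ e) ^ (-β) :=
    Real.rpow_le_rpow_of_nonpos hB hwt (by linarith)
  rw [hfin] at hstep
  rw [ge_iff_le, div_le_iff₀ hα₀] at hstep
  linarith [hstep]
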